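/- arXiv:2107.13061 — 3 statements merged into one kernel-verified Lean document; each statement's English description precedes it below -/
import Mathlib

section
/- Let a, b be real numbers with 3 ≤ a < b, and suppose there exists z_0 ∈ [0, a] such that φ_{a,b}(z_0) ≤ 0. Then for every odd integer j = 2m+1, m ≥ 1, one has φ_{a,b}(r_j) ≤ 0, where r_j := q_2 q_3 ⋯ q_j z_0 = (ab)^m z_0. -/
open scoped Classical

/-- Taylor coefficients of `f_{a,b}`: `a₀ = a₁ = 1`,
`aₖ = aₖ₋₁² / (aₖ₋₂ · qₖ)` where `qₖ = a` for even `k` and `qₖ = b` for odd `k`. -/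
noncomputable def coeffAB (a b : ℝ) : ℕ → ℝ
  | 0 => 1
  | 1 => 1
  | n + 2 => (coeffAB a b (n + 1)) ^ 2 / (coeffAB a b n * (if Even n then a else b))

/-- The entire function `f_{a,b}(z) = Σ aₖ zᵏ` (as a function on `ℂ`). -/
noncomputable def fAB (a b : ℝ) (z : ℂ) : ℂ := ∑' k : ℕ, (coeffAB a b k : ℂ) * z ^ k

/-- The restriction of `f_{a,b}` to the reals. -/
noncomputable def fABReal (a b x : ℝ) : ℝ := ∑' k : ℕ, coeffAB a b k * x ^ k

/-- `φ_{a,b}(x) = f_{a,b}(-x) = Σ (-1)ᵏ aₖ xᵏ` (real variable). -/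
noncomputable def phiAB (a b x : ℝ) : ℝ := ∑' k : ℕ, (-1 : ℝ) ^ k * coeffAB a b k * x ^ k

/-- `φ_{a,b}` as a function of a complex variable. -/
noncomputable def phiABC (a b : ℝ) (z : ℂ) : ℂ :=
  ∑' k : ℕ, (-1 : ℂ) ^ k * (coeffAB a b k : ℂ) * z ^ k

/-- Membership in the Laguerre–Pólya class of type I:
`f(z) = c zⁿ e^{βz} ∏ (1 + z/xₖ)` with `c ∈ ℝ`, `β ≥ 0`, `xₖ > 0`, `Σ 1/xₖ < ∞`
(the product over a countable — possibly finite or empty — index set). -/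
def LaguerrePolyaI (f : ℂ → ℂ) : Prop :=
  ∃ (c : ℝ) (n : ℕ) (β : ℝ) (ι : Type) (_ : Countable ι) (x : ι → ℝ),
    0 ≤ β ∧ (∀ i, 0 < x i) ∧ Summable (fun i => (x i)⁻¹) ∧
    ∀ z : ℂ, f z = (c : ℂ) * z ^ n * Complex.exp (β * z) * ∏' i, (1 + z / (x i : ℂ))

/-- The partial theta function `g_t(z) = Σ zᵏ t^{-k²}` (complex variable). -/
noncomputable def partialTheta (t : ℝ) (z : ℂ) : ℂ := ∑' k : ℕ, z ^ k / (t : ℂ) ^ (k ^ 2)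

/-- The partial theta function restricted to the reals. -/
noncomputable def partialThetaReal (t x : ℝ) : ℝ := ∑' k : ℕ, x ^ k / t ^ (k ^ 2)

/-- A function `f : ℂ → ℂ` has only real zeros. -/
def OnlyRealZeros (f : ℂ → ℂ) : Prop := ∀ z : ℂ, f z = 0 → ∃ r : ℝ, z = (r : ℂ)

/-- The constant `q_∞ ≈ 3.2336…`: the infimum of the set
`{t² : t > 1 and g_t has only real zeros}`. -/
noncomputable def qInfty : ℝ :=
  sInf {s : ℝ | ∃ t : ℝ, 1 < t ∧ s = t ^ 2 ∧ OnlyRealZeros (partialTheta t)}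


section Aux

lemma coeffAB_rec (a b : ℝ) (n : ℕ) :
    coeffAB a b (n + 2) =
      (coeffAB a b (n + 1)) ^ 2 / (coeffAB a b n * (if Even n then a else b)) := by
  rw [coeffAB]

lemma coeffAB_pos {a b : ℝ} (ha : 0 < a) (hb : 0 < b) (n : ℕ) : 0 < coeffAB a b n := by
  have key : ∀ m, 0 < coeffAB a b m ∧ 0 < coeffAB a b (m + 1) := by
    intro m
    induction m with
    | zero => exact ⟨by simp [coeffAB], by simp [coeffAB]⟩
    | succ k ih =>
      refine ⟨ih.2, ?_⟩
      rw [coeffAB_rec]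
      have hq : 0 < (if Even k then a else b) := by split <;> assumption
      exact div_pos (pow_pos ih.2 2) (mul_pos ih.1 hq)
  exact (key n).1

lemma coeffAB_ratio {a b : ℝ} (ha : 3 ≤ a) (hb : 3 ≤ b) (n : ℕ) :
    coeffAB a b (n + 1) * 3 ^ n ≤ coeffAB a b n := by
  have h0a : 0 < a := lt_of_lt_of_le (by norm_num) ha
  have h0b : 0 < b := lt_of_lt_of_le (by norm_num) hb
  induction n with
  | zero => simp [coeffAB]
  | succ k ih =>
    have hq : 3 ≤ (if Even k then a else b) := by split <;> assumption
    have hq0 : 0 < (if Even k then a else b) := lt_of_lt_of_le (by norm_num) hq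
    have hc0 := coeffAB_pos h0a h0b k
    have hc1 := coeffAB_pos h0a h0b (k + 1)
    rw [coeffAB_rec, div_mul_eq_mul_div, div_le_iff₀ (mul_pos hc0 hq0), pow_succ 3 k]
    have h3 : (0:ℝ) < 3 ^ k := by positivity
    nlinarith [mul_le_mul_of_nonneg_left ih hc1.le,
      mul_le_mul_of_nonneg_left hq (mul_pos hc1 hc0).le]

lemma coeffAB_mono {a b : ℝ} (ha : 3 ≤ a) (hb : 3 ≤ b) (n : ℕ) :
    coeffAB a b (n + 1) ≤ coeffAB a b n := by
  have h0a : (0:ℝ) < a := by linarith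
  have h0b : (0:ℝ) < b := by linarith
  have h := coeffAB_ratio ha hb n
  have h1 : (1:ℝ) ≤ 3 ^ n := one_le_pow₀ (by norm_num : (1:ℝ) ≤ 3)
  nlinarith [coeffAB_pos h0a h0b (n+1)]

lemma summableAB {a b : ℝ} (ha : 3 ≤ a) (hb : 3 ≤ b) {x : ℝ} (hx : 0 ≤ x) :
    Summable (fun k : ℕ => (-1 : ℝ) ^ k * coeffAB a b k * x ^ k) := by
  have h0a : (0:ℝ) < a := by linarith
  have h0b : (0:ℝ) < b := by linarith
  have hnorm : ∀ k : ℕ, ‖(-1 : ℝ) ^ k * coeffAB a b k * x ^ k‖ = coeffAB a b k * x ^ k := by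
    intro k
    rw [Real.norm_eq_abs, abs_mul, abs_mul, abs_pow, abs_neg, abs_one, one_pow, one_mul,
      abs_of_nonneg (coeffAB_pos h0a h0b k).le, abs_of_nonneg (pow_nonneg hx k)]
  obtain ⟨N, hN⟩ := pow_unbounded_of_one_lt (2 * x) (by norm_num : (1:ℝ) < 3)
  apply summable_of_ratio_norm_eventually_le (r := 1/2) (by norm_num)
  filter_upwards [Filter.eventually_ge_atTop N] with n hn
  rw [hnorm, hnorm]
  have h3 : (3:ℝ) ^ N ≤ 3 ^ n := pow_le_pow_right₀ (by norm_num) hn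
  have hx2 : 2 * x ≤ 3 ^ n := le_trans hN.le h3
  have hr := coeffAB_ratio ha hb n
  have hc1 := coeffAB_pos h0a h0b (n + 1)
  have hxn : (0:ℝ) ≤ x ^ n := pow_nonneg hx n
  rw [pow_succ]
  nlinarith [mul_nonneg (sub_nonneg.2 hr) hxn,
    mul_nonneg (mul_nonneg (sub_nonneg.2 hx2) hc1.le) hxn]

lemma coeffAB_key {a b : ℝ} (h0a : 0 < a) (h0b : 0 < b) (k : ℕ) :
    coeffAB a b (k + 2) * (a * b) ^ (k + 2) = a * b ^ 2 * coeffAB a b k := by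
  have hane : a ≠ 0 := h0a.ne'
  have hbne : b ≠ 0 := h0b.ne'
  have key : ∀ m, coeffAB a b (m + 2) * (a * b) ^ (m + 2) = a * b ^ 2 * coeffAB a b m ∧
      coeffAB a b (m + 3) * (a * b) ^ (m + 3) = a * b ^ 2 * coeffAB a b (m + 1) := by
    intro m
    induction m with
    | zero =>
      constructor
      · show coeffAB a b 2 * (a*b)^2 = a * b^2 * coeffAB a b 0
        rw [coeffAB_rec]
        norm_num [coeffAB]
        field_simp
      · show coeffAB a b 3 * (a*b)^3 = a * b^2 * coeffAB a b 1
        rw [coeffAB_rec, coeffAB_rec]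
        norm_num [coeffAB]
        field_simp
    | succ m ih =>
      obtain ⟨h1, h2⟩ := ih
      refine ⟨h2, ?_⟩
      have hc0 := (coeffAB_pos h0a h0b m).ne'
      have hc1 := (coeffAB_pos h0a h0b (m+1)).ne'
      have hc2 := (coeffAB_pos h0a h0b (m+2)).ne'
      have hc3 := (coeffAB_pos h0a h0b (m+3)).ne'
      have hq0 : (if Even m then a else b) ≠ 0 := by split <;> assumption
      have hpar : Even (m + 2) ↔ Even m := by rw [Nat.even_add]; simp
      have e4 : coeffAB a b (m + 4) =
          coeffAB a b (m + 3) ^ 2 / (coeffAB a b (m + 2) * (if Even m then a else b)) := by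
        have t := coeffAB_rec a b (m + 2)
        rw [show m + 2 + 2 = m + 4 from rfl, show m + 2 + 1 = m + 3 from rfl] at t
        simp only [hpar] at t
        exact t
      have e2 : coeffAB a b (m + 2) =
          coeffAB a b (m + 1) ^ 2 / (coeffAB a b m * (if Even m then a else b)) :=
        coeffAB_rec a b m
      have hA : (a * b) ≠ 0 := mul_ne_zero hane hbne
      have hA2 : ((a*b):ℝ) ^ (m+2) ≠ 0 := pow_ne_zero _ hA
      have hA3 : ((a*b):ℝ) ^ (m+3) ≠ 0 := pow_ne_zero _ hA
      show coeffAB a b (m + 4) * (a * b) ^ (m + 4) = a * b ^ 2 * coeffAB a b (m + 2)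
      rw [e4]
      rw [div_mul_eq_mul_div, div_eq_iff (mul_ne_zero hc2 hq0)]
      have h2' : coeffAB a b (m+3) = a * b^2 * coeffAB a b (m+1) / (a*b)^(m+3) := by
        field_simp at h2 ⊢; linarith [h2]
      have h1' : coeffAB a b (m+2) = a * b^2 * coeffAB a b m / (a*b)^(m+2) := by
        field_simp at h1 ⊢; linarith [h1]
      nth_rewrite 2 [e2]
      rw [h1', h2']
      field_simp
      ring_nf
  exact (key k).1

lemma phiAB_funcEq {a b : ℝ} (ha : 3 ≤ a) (hb : 3 ≤ b) {x : ℝ} (hx : 0 ≤ x) :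
    phiAB a b (a * b * x) = 1 - a * b * x + a * b ^ 2 * x ^ 2 * phiAB a b x := by
  have h0a : (0:ℝ) < a := by linarith
  have h0b : (0:ℝ) < b := by linarith
  have habx : 0 ≤ a * b * x := by positivity
  set f : ℕ → ℝ := fun k => (-1 : ℝ) ^ k * coeffAB a b k * (a * b * x) ^ k with hf
  have hs : Summable f := summableAB ha hb habx
  have hs1 : Summable (fun n => f (n + 1)) := (summable_nat_add_iff 1).2 hs
  have step : ∀ n : ℕ, f (n + 2) = a * b ^ 2 * x ^ 2 * ((-1:ℝ)^n * coeffAB a b n * x ^ n) := by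
    intro n
    have hkey := coeffAB_key h0a h0b n
    simp only [hf]
    rw [mul_pow (a*b) x (n+2)]
    have : (-1:ℝ) ^ (n + 2) = (-1:ℝ) ^ n := by ring
    rw [this]
    calc (-1:ℝ)^n * coeffAB a b (n+2) * ((a*b)^(n+2) * x^(n+2))
        = (-1:ℝ)^n * (coeffAB a b (n+2) * (a*b)^(n+2)) * x^(n+2) := by ring
      _ = (-1:ℝ)^n * (a * b^2 * coeffAB a b n) * x^(n+2) := by rw [hkey]
      _ = a * b ^ 2 * x ^ 2 * ((-1:ℝ)^n * coeffAB a b n * x ^ n) := by ring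
  have hphi : phiAB a b (a*b*x) = f 0 + (f 1 + ∑' n, f (n + 1 + 1)) := by
    rw [phiAB, ← hf, Summable.tsum_eq_zero_add hs, Summable.tsum_eq_zero_add hs1]
  rw [hphi]
  have hf0 : f 0 = 1 := by simp [hf, coeffAB]
  have hf1 : f 1 = -(a * b * x) := by simp [hf, coeffAB]
  have htail : (∑' n, f (n + 1 + 1)) = a * b ^ 2 * x ^ 2 * phiAB a b x := by
    rw [tsum_congr (fun n => step n), tsum_mul_left, phiAB]
  rw [htail, hf0, hf1]
  ring

lemma phiAB_pos_of_lt_one {a b : ℝ} (ha : 3 ≤ a) (hb : 3 ≤ b) {x : ℝ}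
    (hx0 : 0 ≤ x) (hx1 : x < 1) : 0 < phiAB a b x := by
  have h0a : (0:ℝ) < a := by linarith
  have h0b : (0:ℝ) < b := by linarith
  set f : ℕ → ℝ := fun k => (-1 : ℝ) ^ k * coeffAB a b k * x ^ k with hf
  have hs : Summable f := summableAB ha hb hx0
  have hse : Summable (fun k => f (2 * k)) :=
    hs.comp_injective (fun i j h => by omega)
  have hso : Summable (fun k => f (2 * k + 1)) :=
    hs.comp_injective (fun i j h => by omega)
  have hsplit : (∑' k, (f (2 * k) + f (2 * k + 1))) = phiAB a b x := by
    rw [Summable.tsum_add hse hso, phiAB, ← hf, tsum_even_add_odd hse hso]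
  set g : ℕ → ℝ := fun k => f (2 * k) + f (2 * k + 1) with hg
  have hgval : ∀ k, g k = coeffAB a b (2*k) * x ^ (2*k) - coeffAB a b (2*k+1) * x ^ (2*k+1) := by
    intro k
    simp only [hg, hf]
    rw [pow_mul, pow_succ (-1:ℝ) (2*k), pow_mul]
    norm_num
    ring
  have hgnonneg : ∀ k, 0 ≤ g k := by
    intro k
    rw [hgval k]
    have hmono := coeffAB_mono ha hb (2*k)
    have hc := coeffAB_pos h0a h0b (2*k+1)
    have hxn : (0:ℝ) ≤ x ^ (2*k) := pow_nonneg hx0 _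
    rw [pow_succ]
    nlinarith [mul_nonneg (sub_nonneg.2 hmono) hxn,
      mul_nonneg (mul_nonneg hc.le hxn) (by linarith : (0:ℝ) ≤ 1 - x)]
  have hg0 : g 0 = 1 - x := by
    simp [hg, hf, coeffAB]
    ring
  have hsg : Summable g := hse.add hso
  have hle : g 0 ≤ ∑' k, g k := Summable.le_tsum hsg 0 (fun j _ => hgnonneg j)
  rw [hg0] at hle
  rw [← hsplit]
  linarith

end Aux

/-- For `3 ≤ a < b`, if `φ_{a,b}(z₀) ≤ 0` for some `z₀ ∈ [0, a]`,
then for every odd `j = 2m + 1`, `m ≥ 1`, one has `φ_{a,b}(r_j) ≤ 0` where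
`r_j = (ab)ᵐ z₀`. -/
theorem phiAB_nonpos_at_r (a b : ℝ) (ha : 3 ≤ a) (hab : a < b) (z₀ : ℝ)
    (hz₀ : z₀ ∈ Set.Icc (0 : ℝ) a) (h : phiAB a b z₀ ≤ 0) (m : ℕ) (hm : 1 ≤ m) :
    phiAB a b ((a * b) ^ m * z₀) ≤ 0 := by
  have hb : 3 ≤ b := by linarith
  have h0a : (0:ℝ) < a := by linarith
  have h0b : (0:ℝ) < b := by linarith
  obtain ⟨hz0, hza⟩ := hz₀
  have hz1 : 1 ≤ z₀ := by
    by_contra hcon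
    push_neg at hcon
    exact absurd h (not_le.2 (phiAB_pos_of_lt_one ha hb hz0 hcon))
  have key : ∀ n : ℕ, 1 ≤ (a * b) ^ n * z₀ ∧ phiAB a b ((a * b) ^ n * z₀) ≤ 0 := by
    intro n
    induction n with
    | zero => simpa using ⟨hz1, h⟩
    | succ k ih =>
      obtain ⟨h1, h2⟩ := ih
      set t := (a * b) ^ k * z₀ with ht
      have ht0 : 0 ≤ t := by positivity
      have habt : (a * b) ^ (k+1) * z₀ = a * b * t := by rw [ht]; ring
      have hab9 : (9:ℝ) ≤ a * b := by nlinarith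
      have h9t : (9:ℝ) ≤ a * b * t := by
        nlinarith [mul_nonneg (by linarith : (0:ℝ) ≤ a*b - 9) (by linarith : (0:ℝ) ≤ t)]
      constructor
      · rw [habt]; linarith
      · rw [habt, phiAB_funcEq ha hb ht0]
        have h3 : a * b ^ 2 * t ^ 2 * phiAB a b t ≤ 0 :=
          mul_nonpos_of_nonneg_of_nonpos (by positivity) h2
        linarith
  exact (key m).2
end

section
/- Let a, b, d be real numbers with 3 ≤ a < d < b. Then for every x ∈ (1, a], φ_{d,b}(x) ≤ φ_{a,b}(x); that is, for fixed b and fixed x ∈ (1, a], the value φ_{a,b}(x) is non-increasing as a function of the first parameter on [a, d]. -/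
open scoped Classical

lemma coeffAB_formula (α b : ℝ) (hα : α ≠ 0) (hb : b ≠ 0) (m : ℕ) :
    coeffAB α b (2*m) = b^m * (α^(m*m) * b^(m*m))⁻¹ ∧
    coeffAB α b (2*m+1) = (α^(m*m+m) * b^(m*m))⁻¹ := by
  induction m with
  | zero => simp [coeffAB]
  | succ n ih =>
    obtain ⟨h0, h1⟩ := ih
    have heven : coeffAB α b (2*(n+1)) = b^(n+1) * (α^((n+1)*(n+1)) * b^((n+1)*(n+1)))⁻¹ := by
      have e : 2*(n+1) = (2*n) + 2 := by ring
      rw [e, coeffAB, if_pos (even_two_mul n), h0, h1]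
      rw [show (n+1)*(n+1) = n*n + n + (n+1) from by ring]
      simp only [pow_add, pow_one]
      field_simp
    have hodd : coeffAB α b (2*(n+1)+1) = (α^((n+1)*(n+1)+(n+1)) * b^((n+1)*(n+1)))⁻¹ := by
      have e : 2*(n+1)+1 = (2*n+1) + 2 := by ring
      rw [e, coeffAB, if_neg (by simp [Nat.even_add_one, Nat.not_even_iff_odd, Nat.odd_add_one, even_two_mul n])]
      rw [show (2*n+1)+1 = 2*(n+1) from by ring, heven, h1]
      rw [show (n+1)*(n+1)+(n+1) = (n*n+n) + (2*n+2) from by ring,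
          show (n+1)*(n+1) = n*n + (2*n+1) from by ring]
      simp only [pow_add, pow_one]
      field_simp
      ring
    exact ⟨heven, hodd⟩

lemma coeffAB_pos_s12 (α b : ℝ) (hα : 0 < α) (hb : 0 < b) (k : ℕ) : 0 < coeffAB α b k := by
  rcases Nat.even_or_odd k with ⟨m, hm⟩ | ⟨m, hm⟩
  · rw [show k = 2*m from by omega, (coeffAB_formula α b hα.ne' hb.ne' m).1]
    positivity
  · rw [hm, (coeffAB_formula α b hα.ne' hb.ne' m).2]
    positivity

lemma coeffAB_step (α b x : ℝ) (hα : 3 ≤ α) (hb : 3 ≤ b) (hx : 0 < x) (hxα : x ≤ α)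
    (k : ℕ) (hk : 2 ≤ k) : coeffAB α b (k+1) * x ≤ 1/3 * coeffAB α b k := by
  have hα0 : (0:ℝ) < α := by linarith
  have hb0 : (0:ℝ) < b := by linarith
  rcases Nat.even_or_odd k with ⟨m, hm⟩ | ⟨m, hm⟩
  · -- k = 2m, m ≥ 1
    have hm' : k = 2*m := by omega
    have hm1 : m ≠ 0 := by omega
    rw [hm', (coeffAB_formula α b hα0.ne' hb0.ne' m).1, (coeffAB_formula α b hα0.ne' hb0.ne' m).2]
    have hA : (0:ℝ) < α^(m*m+m) * b^(m*m) := by positivity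
    have hA' : (0:ℝ) < α^(m*m) * b^(m*m) := by positivity
    rw [inv_mul_eq_div]
    have e2 : (1/3 : ℝ) * (b^m * (α^(m*m) * b^(m*m))⁻¹) = b^m / (3 * (α^(m*m) * b^(m*m))) := by
      field_simp
    rw [e2, div_le_div_iff₀ hA (by positivity)]
    rw [pow_add]
    have h1 : α ≤ α^m := le_self_pow₀ (by linarith) hm1
    have h2 : b ≤ b^m := le_self_pow₀ (by linarith) hm1
    have hcore : 3*x ≤ α^m * b^m := by nlinarith [mul_le_mul h1 h2 (by linarith) (by positivity : (0:ℝ) ≤ α^m)]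
    nlinarith [mul_le_mul_of_nonneg_right hcore hA'.le]
  · -- k = 2m+1, m ≥ 1
    have hm1 : m ≠ 0 := by omega
    rw [hm, show 2*m+1+1 = 2*(m+1) from by ring,
        (coeffAB_formula α b hα0.ne' hb0.ne' (m+1)).1, (coeffAB_formula α b hα0.ne' hb0.ne' m).2]
    have hD : (0:ℝ) < α^((m+1)*(m+1)) * b^((m+1)*(m+1)) := by positivity
    have hA : (0:ℝ) < α^(m*m+m) * b^(m*m) := by positivity
    have e1 : b^(m+1) * (α^((m+1)*(m+1)) * b^((m+1)*(m+1)))⁻¹ * x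
        = (b^(m+1) * x) / (α^((m+1)*(m+1)) * b^((m+1)*(m+1))) := by
      field_simp
    have e2 : (1/3 : ℝ) * (α^(m*m+m) * b^(m*m))⁻¹ = 1 / (3 * (α^(m*m+m) * b^(m*m))) := by
      field_simp
    rw [e1, e2, div_le_div_iff₀ hD (by positivity)]
    rw [show (m+1)*(m+1) = (m*m+m) + (m+1) from by ring]
    simp only [pow_add, pow_one]
    have h2 : (3:ℝ) ≤ b^m := le_trans hb (le_self_pow₀ (by linarith) hm1)
    have h3 : (1:ℝ) ≤ α^m := one_le_pow₀ (by linarith)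
    have hcore : 3*x ≤ α^m * α * b^m := by
      nlinarith [mul_le_mul_of_nonneg_right h3 (by positivity : (0:ℝ) ≤ α * b^m),
        mul_le_mul_of_nonneg_left h2 hα0.le]
    have hpos : (0:ℝ) ≤ α^(m*m) * α^m * b^(m*m) * b^m * b := by positivity
    nlinarith [mul_le_mul_of_nonneg_right hcore hpos]

lemma summable_term (α b x : ℝ) (hα : 3 ≤ α) (hb : 3 ≤ b) (hx : 0 < x) (hxα : x ≤ α) :
    Summable (fun k => (-1:ℝ)^k * coeffAB α b k * x ^ k) := by
  have hα0 : (0:ℝ) < α := by linarith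
  have hb0 : (0:ℝ) < b := by linarith
  apply summable_of_ratio_norm_eventually_le (r := 1/3) (by norm_num)
  filter_upwards [Filter.eventually_ge_atTop 2] with k hk
  have hc : ∀ j, 0 < coeffAB α b j := coeffAB_pos_s12 α b hα0 hb0
  have hstep := coeffAB_step α b x hα hb hx hxα k hk
  have e : ∀ j : ℕ, ‖(-1:ℝ)^j * coeffAB α b j * x ^ j‖ = coeffAB α b j * x ^ j := by
    intro j
    rw [Real.norm_eq_abs, abs_mul, abs_mul, abs_pow, abs_pow, abs_neg, abs_one, one_pow, one_mul,
      abs_of_pos (hc j), abs_of_pos hx]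
  rw [e, e, pow_succ]
  nlinarith [mul_le_mul_of_nonneg_right hstep (pow_nonneg hx.le k)]

lemma pair_key (a b d x : ℝ) (ha : 3 ≤ a) (had : a < d) (hdb : d < b)
    (hx : 0 < x) (hxa : x ≤ a) (m : ℕ) :
    (coeffAB a b (2*m+1) - coeffAB d b (2*m+1)) * x^(2*m+1)
      ≤ (coeffAB a b (2*m) - coeffAB d b (2*m)) * x^(2*m) := by
  have ha0 : (0:ℝ) < a := by linarith
  have hd0 : (0:ℝ) < d := by linarith
  have hb0 : (0:ℝ) < b := by linarith
  rcases Nat.eq_zero_or_pos m with rfl | hm0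
  · simp [coeffAB]
  have hm1 : m ≠ 0 := hm0.ne'
  rw [(coeffAB_formula a b ha0.ne' hb0.ne' m).1, (coeffAB_formula a b ha0.ne' hb0.ne' m).2,
      (coeffAB_formula d b hd0.ne' hb0.ne' m).1, (coeffAB_formula d b hd0.ne' hb0.ne' m).2]
  have hPQ : a^(m*m) ≤ d^(m*m) := pow_le_pow_left₀ ha0.le had.le _
  have hTS : a^m ≤ d^m := pow_le_pow_left₀ ha0.le had.le _
  have hSB : d^m ≤ b^m := pow_le_pow_left₀ hd0.le hdb.le _
  -- key inequality
  obtain ⟨r, hr⟩ : ∃ r, m*m = m + r := ⟨m*m - m, by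
    have : m ≤ m*m := Nat.le_mul_of_pos_left m hm0
    omega⟩
  have hpq : a^(m*m) * (d^m - a^m) ≤ a^m * (d^(m*m) - a^(m*m)) := by
    rw [hr, pow_add, pow_add]
    have h := pow_le_pow_left₀ ha0.le had.le r
    nlinarith [mul_le_mul_of_nonneg_right h (pow_nonneg hd0.le m), pow_pos ha0 m,
      pow_pos ha0 r, pow_pos hd0 m]
  have key' : x * (d^(m*m)*d^m - a^(m*m)*a^m) ≤ b^m * (d^(m*m) - a^(m*m)) * (a^m * d^m) := by
    have hSPTQ : a^(m*m) * a^m ≤ d^(m*m) * d^m :=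
      mul_le_mul hPQ hTS (pow_nonneg ha0.le m) (pow_nonneg hd0.le _)
    have H0 : x * (d^(m*m)*d^m - a^(m*m)*a^m) ≤ a * (d^(m*m)*d^m - a^(m*m)*a^m) :=
      mul_le_mul_of_nonneg_right hxa (by linarith)
    have H1 : a * (a^(m*m) * (d^m - a^m)) ≤ a * (a^m * (d^(m*m) - a^(m*m))) :=
      mul_le_mul_of_nonneg_left hpq ha0.le
    have H4 : a^m * (a * (d^(m*m) - a^(m*m))) ≤ d^m * (a * (d^(m*m) - a^(m*m))) :=
      mul_le_mul_of_nonneg_right hTS (by nlinarith)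
    have hB3 : (3:ℝ) ≤ b^m := le_trans (by linarith) (le_self_pow₀ (by linarith) hm1)
    have hTa : a ≤ a^m := le_self_pow₀ (by linarith) hm1
    have hBT : 2*a ≤ b^m * a^m := by
      nlinarith [mul_le_mul hB3 hTa (by linarith) (by linarith : (0:ℝ) ≤ b^m)]
    have H5 : (2*a) * (d^m * (d^(m*m) - a^(m*m))) ≤ (b^m * a^m) * (d^m * (d^(m*m) - a^(m*m))) :=
      mul_le_mul_of_nonneg_right hBT (by nlinarith [pow_pos hd0 m])
    nlinarith [H0, H1, H4, H5]
  -- now reduce the goal to key'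
  have hDa : (0:ℝ) < a^(m*m+m) * b^(m*m) := by positivity
  have hDd : (0:ℝ) < d^(m*m+m) * b^(m*m) := by positivity
  have eL : (a^(m*m+m) * b^(m*m))⁻¹ - (d^(m*m+m) * b^(m*m))⁻¹
      = (d^(m*m)*d^m - a^(m*m)*a^m) / (a^(m*m+m) * d^(m*m+m) * b^(m*m)) := by
    rw [pow_add, pow_add]
    field_simp
  have eR : b^m * (a^(m*m) * b^(m*m))⁻¹ - b^m * (d^(m*m) * b^(m*m))⁻¹
      = b^m * (d^(m*m) - a^(m*m)) / (a^(m*m) * d^(m*m) * b^(m*m)) := by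
    field_simp
  rw [eL, eR, pow_succ, div_mul_eq_mul_div, div_mul_eq_mul_div,
    div_le_div_iff₀ (by positivity) (by positivity)]
  rw [pow_add, pow_add]
  nlinarith [mul_le_mul_of_nonneg_right key'
    (by positivity : (0:ℝ) ≤ x^(2*m) * (a^(m*m) * d^(m*m) * b^(m*m)))]

/-- For `3 ≤ a < d < b` and `x ∈ (1, a]`, one has
`φ_{d,b}(x) ≤ φ_{a,b}(x)`: for fixed `b` and `x ∈ (1, a]`, `φ_{a,b}(x)` is
non-increasing in the first parameter. -/
theorem phiAB_antitone_fst (a b d : ℝ) (ha : 3 ≤ a) (had : a < d) (hdb : d < b) :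
    ∀ x ∈ Set.Ioc (1 : ℝ) a, phiAB d b x ≤ phiAB a b x := by
  rintro x ⟨hx1, hxa⟩
  have hx0 : (0:ℝ) < x := by linarith
  have hb3 : (3:ℝ) ≤ b := by linarith
  have hFa : Summable (fun k => (-1:ℝ)^k * coeffAB a b k * x ^ k) :=
    summable_term a b x ha hb3 hx0 hxa
  have hFd : Summable (fun k => (-1:ℝ)^k * coeffAB d b k * x ^ k) :=
    summable_term d b x (by linarith) hb3 hx0 (by linarith)
  rw [← sub_nonneg]
  unfold phiAB
  rw [← Summable.tsum_sub hFa hFd]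
  set g : ℕ → ℝ := fun k => (-1:ℝ)^k * coeffAB a b k * x ^ k - (-1:ℝ)^k * coeffAB d b k * x ^ k
    with hg_def
  have hg : Summable g := hFa.sub hFd
  have he : Summable (fun m => g (2*m)) :=
    hg.comp_injective (fun p q h => by omega)
  have ho : Summable (fun m => g (2*m+1)) :=
    hg.comp_injective (fun p q h => by omega)
  rw [← tsum_even_add_odd he ho, ← Summable.tsum_add he ho]
  apply tsum_nonneg
  intro m
  have h1 : ((-1:ℝ))^(2*m) = 1 := by rw [pow_mul]; norm_num
  have h2 : ((-1:ℝ))^(2*m+1) = -1 := by rw [pow_succ, h1]; norm_num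
  have key := pair_key a b d x ha had hdb hx0 hxa m
  simp only [hg_def, h1, h2, one_mul, neg_mul, neg_one_mul]
  linarith [key]
end

section
/- Let a, b be real numbers with 3 ≤ a < b, and suppose there exists z_0 ∈ (1, a] such that φ_{a,b}(z_0) ≤ 0. Then the partial theta function g_{√a} satisfies g_{√a}(−√a · z_0) ≤ 0; in particular there exists a point y_0 with √a < |y_0| ≤ (√a)³, namely y_0 = −√a·z_0 ∈ [−a^{3/2}, −a^{1/2}), at which g_{√a}(y_0) ≤ 0. -/
open scoped Classical

-- closed form
lemma coeff_closed (a b : ℝ) (ha : 0 < a) (hb : 0 < b) (m : ℕ) :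
    coeffAB a b (2*m+1) = (a^(m*(m+1)) * b^(m*m))⁻¹ ∧
    coeffAB a b (2*m+2) = (a^((m+1)*(m+1)) * b^(m*(m+1)))⁻¹ := by
  have ha' := ha.ne'
  have hb' := hb.ne'
  induction m with
  | zero =>
    constructor
    · show coeffAB a b 1 = _
      rw [coeffAB]; norm_num
    · show coeffAB a b (0+2) = _
      rw [coeffAB]; rw [coeffAB, coeffAB]
      norm_num
  | succ j ih =>
    obtain ⟨ih1, ih2⟩ := ih
    have hodd : ¬ Even (2*j+1) := by simp [Nat.even_add_one, parity_simps]
    have heven : Even (2*j+2) := by exact ⟨j+1, by ring⟩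
    constructor
    · have e : 2*(j+1)+1 = (2*j+1)+2 := by ring
      rw [e, coeffAB]
      rw [show 2*j+1+1 = 2*j+2 from by ring, ih2, ih1, if_neg hodd]
      field_simp
      ring
    · have e : 2*(j+1)+2 = (2*j+2)+2 := by ring
      rw [e, coeffAB]
      rw [show 2*j+2+1 = 2*(j+1)+1 from by ring, show (2:ℕ)*(j+1)+1 = (2*j+1)+2 from by ring, coeffAB,
        show 2*j+1+1 = 2*j+2 from by ring, ih2, ih1, if_neg hodd, if_pos heven]
      field_simp
      ring

lemma myL1 (x y : ℝ) (hy : 0 ≤ y) (hxy : y ≤ x) (n : ℕ) :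
    y^n*(x-y) ≤ x^(n+1) - y^(n+1) := by
  have h := pow_le_pow_left₀ hy hxy n
  have hx : 0 ≤ x := hy.trans hxy
  have h2 : x*y^n ≤ x*x^n := mul_le_mul_of_nonneg_left h hx
  rw [pow_succ, pow_succ]
  nlinarith

lemma myCore (x y : ℝ) (hy : 3 ≤ y) (hxy : y ≤ x) (j : ℕ) :
    x^(j+2) + y^(j+3)*x ≤ y^2*x^(j+2) + y^(j+2) := by
  have hy0 : (0:ℝ) ≤ y := by linarith
  have h1 : y^j*(x-y) ≤ x^(j+1) - y^(j+1) := myL1 x y hy0 hxy j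
  have hXY : y^(j+1) ≤ x^(j+1) := pow_le_pow_left₀ hy0 hxy _
  have hYj : (0:ℝ) ≤ y^j := pow_nonneg hy0 j
  have hY : (0:ℝ) ≤ y^(j+1) := pow_nonneg hy0 _
  have h2 : y^(j+1)*(x-y) ≤ y*(x^(j+1) - y^(j+1)) := by
    have := mul_le_mul_of_nonneg_left h1 (by linarith : (0:ℝ) ≤ y)
    calc y^(j+1)*(x-y) = y*(y^j*(x-y)) := by ring
    _ ≤ y*(x^(j+1)-y^(j+1)) := this
  have h3 : y*(x^(j+1)-y^(j+1)) ≤ x*(y^2-1)*(x^(j+1)-y^(j+1)) := by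
    apply mul_le_mul_of_nonneg_right _ (by linarith)
    have h8 : (0:ℝ) ≤ y^2 - 1 := by nlinarith
    have := mul_le_mul_of_nonneg_right hxy h8
    nlinarith
  have hgoal : y^(j+1)*(x-y) ≤ x*(y^2-1)*(x^(j+1)-y^(j+1)) := h2.trans h3
  have e1 : x^(j+2) = x*x^(j+1) := by ring
  have e2 : y^(j+2) = y*y^(j+1) := by ring
  have e3 : y^(j+3) = y^2*y^(j+1) := by ring
  rw [e1, e2, e3]
  nlinarith [hgoal]

lemma myInvLe (P Q : ℝ) (hP : 0 < P) (hPQ : P ≤ Q) : Q⁻¹ ≤ P⁻¹ := by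
  have hQ : 0 < Q := hP.trans_le hPQ
  rw [inv_le_inv₀ hQ hP]
  exact hPQ

lemma myInvMul (c P Q : ℝ) (hc : 0 ≤ c) (hP : 0 < P) (hQ : 0 < Q) (h : c * P ≤ Q) :
    c * Q⁻¹ ≤ P⁻¹ := by
  rw [← div_eq_mul_inv, ← one_div, div_le_div_iff₀ hQ hP]
  linarith

lemma myPairCore (a b : ℝ) (ha : 3 ≤ a) (hab : a ≤ b) (m : ℕ) :
    a*b^(m*(m+1)) + a^((m+1)*(m+1))*b^m ≤ a^(2*m+1)*b^(m*(m+1)) + a^(m*(m+1)+1) := by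
  have ha0 : (0:ℝ) ≤ a := by linarith
  cases m with
  | zero => norm_num
  | succ j =>
    set y := a^(j+1) with hydef
    set x := b^(j+1) with hxdef
    have hy3 : 3 ≤ y := by
      calc (3:ℝ) ≤ a := ha
      _ ≤ a^(j+1) := le_self_pow₀ (by linarith) (Nat.succ_ne_zero j)
    have hxy : y ≤ x := pow_le_pow_left₀ ha0 hab _
    have core := myCore x y hy3 hxy j
    have e1 : b^((j+1)*(j+1+1)) = x^(j+2) := by rw [hxdef, ← pow_mul]
    have e2 : a^((j+1+1)*(j+1+1)) = y^(j+3)*a := by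
      rw [hydef, ← pow_mul, ← pow_succ]; congr 1; ring
    have e3 : a^(2*(j+1)+1) = y^2*a := by
      rw [hydef]; ring
    have e4 : a^((j+1)*(j+1+1)+1) = y^(j+2)*a := by
      rw [hydef]; ring
    rw [e1, e2, e3, e4]
    have hbj : b^(j+1) = x := rfl
    nlinarith [core, ha0]

lemma coeff_pos (a b : ℝ) (ha : 0 < a) (hb : 0 < b) (k : ℕ) : 0 < coeffAB a b k := by
  obtain ⟨m, rfl | rfl⟩ := Nat.even_or_odd' k
  · cases m with
    | zero => rw [show 2*0 = 0 from rfl, coeffAB]; norm_num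
    | succ j =>
      rw [show 2*(j+1) = 2*j+2 from by ring, (coeff_closed a b ha hb j).2]
      positivity
  · rw [(coeff_closed a b ha hb m).1]; positivity

lemma coeff_ratio (a b : ℝ) (ha : 3 ≤ a) (hab : a ≤ b) (k : ℕ) (hk : 3 ≤ k) :
    coeffAB a b (k+1) * a^3 ≤ coeffAB a b k := by
  have ha0 : (0:ℝ) < a := by linarith
  have hb0 : (0:ℝ) < b := by linarith
  have ha1 : (1:ℝ) ≤ a := by linarith
  obtain ⟨m, rfl | rfl⟩ := Nat.even_or_odd' k
  · -- k = 2m even, k ≥ 3 so m ≥ 2, write m = i+2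
    obtain ⟨i, rfl⟩ : ∃ i, m = i + 2 := ⟨m - 2, by omega⟩
    rw [show 2*(i+2) = 2*(i+1)+2 from by ring, show 2*(i+1)+2+1 = 2*(i+2)+1 from by ring,
      (coeff_closed a b ha0 hb0 (i+1)).2, (coeff_closed a b ha0 hb0 (i+2)).1]
    rw [mul_comm]
    apply myInvMul _ _ _ (by positivity) (by positivity) (by positivity)
    have hbb : a^((i+2)*(i+2)) ≤ b^((i+2)*(i+2)) := pow_le_pow_left₀ ha0.le hab _
    have key : a^3 ≤ a^(i+2) * b^(i+2) := by
      calc a^3 ≤ a^(2*(i+2)) := pow_le_pow_right₀ ha1 (by omega)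
      _ = a^(i+2) * a^(i+2) := by rw [← pow_add]; congr 1; ring
      _ ≤ a^(i+2) * b^(i+2) := by
          exact mul_le_mul_of_nonneg_left (pow_le_pow_left₀ ha0.le hab _) (by positivity)
    calc a^3 * (a^((i+1+1)*(i+1+1)) * b^((i+1)*(i+1+1)))
        ≤ (a^(i+2) * b^(i+2)) * (a^((i+2)*(i+2)) * b^((i+1)*(i+2))) := by
          apply mul_le_mul key (le_refl _) (by positivity) (by positivity)
      _ = a^((i+2)*(i+2+1)) * b^((i+2)*(i+2)) := by ring
  · -- k = 2m+1 odd, m ≥ 1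
    obtain ⟨i, rfl⟩ : ∃ i, m = i + 1 := ⟨m - 1, by omega⟩
    rw [show 2*(i+1)+1+1 = 2*(i+1)+2 from by ring,
      (coeff_closed a b ha0 hb0 (i+1)).2, (coeff_closed a b ha0 hb0 (i+1)).1]
    rw [mul_comm]
    apply myInvMul _ _ _ (by positivity) (by positivity) (by positivity)
    have key : a^3 ≤ a^(i+2) * b^(i+1) := by
      calc a^3 ≤ a^(2*(i+1)+1) := pow_le_pow_right₀ ha1 (by omega)
      _ = a^(i+2) * a^(i+1) := by rw [← pow_add]; congr 1; ring
      _ ≤ a^(i+2) * b^(i+1) := by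
          exact mul_le_mul_of_nonneg_left (pow_le_pow_left₀ ha0.le hab _) (by positivity)
    calc a^3 * (a^((i+1)*(i+1+1)) * b^((i+1)*(i+1)))
        ≤ (a^(i+2) * b^(i+1)) * (a^((i+1)*(i+2)) * b^((i+1)*(i+1))) := by
          apply mul_le_mul key (le_refl _) (by positivity) (by positivity)
      _ = a^((i+1+1)*(i+1+1)) * b^((i+1)*(i+1+1)) := by ring

lemma myPair (a b z₀ : ℝ) (ha : 3 ≤ a) (hab : a ≤ b) (hz1 : 1 < z₀) (hza : z₀ ≤ a) (m : ℕ) :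
    ((a^((m+1)*(2*m+1)))⁻¹ - (a^((m+1)*(m+1)) * b^(m*(m+1)))⁻¹) * z₀^(2*m+2) ≤
    ((a^(m*(m+1)+m*m))⁻¹ - (a^(m*(m+1)) * b^(m*m))⁻¹) * z₀^(2*m+1) := by
  have ha0 : (0:ℝ) < a := by linarith
  have hb0 : (0:ℝ) < b := by linarith
  have hz0 : (0:ℝ) < z₀ := by linarith
  have hC4A4 : a^((m+1)*(2*m+1)) ≤ a^((m+1)*(m+1)) * b^(m*(m+1)) := by
    calc a^((m+1)*(2*m+1)) = a^((m+1)*(m+1)) * a^(m*(m+1)) := by ring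
    _ ≤ a^((m+1)*(m+1)) * b^(m*(m+1)) :=
        mul_le_mul_of_nonneg_left (pow_le_pow_left₀ ha0.le hab _) (by positivity)
  have h1 : 0 ≤ (a^((m+1)*(2*m+1)))⁻¹ - (a^((m+1)*(m+1)) * b^(m*(m+1)))⁻¹ := by
    have := myInvLe _ _ (by positivity) hC4A4
    linarith
  have hW : (0:ℝ) < a^((m+1)*(2*m+1)) * b^(m*(m+1)) := by positivity
  have step3 : a*(a^((m+1)*(2*m+1)))⁻¹ + (a^(m*(m+1)) * b^(m*m))⁻¹ ≤
      (a^(m*(m+1)+m*m))⁻¹ + a*(a^((m+1)*(m+1)) * b^(m*(m+1)))⁻¹ := by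
    rw [← mul_le_mul_iff_of_pos_right hW]
    have e1 : (a*(a^((m+1)*(2*m+1)))⁻¹ + (a^(m*(m+1)) * b^(m*m))⁻¹) *
        (a^((m+1)*(2*m+1)) * b^(m*(m+1))) =
        a*b^(m*(m+1)) + a^((m+1)*(m+1))*b^m := by
      field_simp
      ring
    have e2 : ((a^(m*(m+1)+m*m))⁻¹ + a*(a^((m+1)*(m+1)) * b^(m*(m+1)))⁻¹) *
        (a^((m+1)*(2*m+1)) * b^(m*(m+1))) =
        a^(2*m+1)*b^(m*(m+1)) + a^(m*(m+1)+1) := by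
      field_simp
      ring
    rw [e1, e2]
    exact myPairCore a b ha hab m
  have step2 : ((a^((m+1)*(2*m+1)))⁻¹ - (a^((m+1)*(m+1)) * b^(m*(m+1)))⁻¹) * z₀ ≤
      (a^(m*(m+1)+m*m))⁻¹ - (a^(m*(m+1)) * b^(m*m))⁻¹ := by
    have := mul_le_mul_of_nonneg_left hza h1
    nlinarith [step3]
  calc ((a^((m+1)*(2*m+1)))⁻¹ - (a^((m+1)*(m+1)) * b^(m*(m+1)))⁻¹) * z₀^(2*m+2)
      = (((a^((m+1)*(2*m+1)))⁻¹ - (a^((m+1)*(m+1)) * b^(m*(m+1)))⁻¹) * z₀) * z₀^(2*m+1) := by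
        ring
    _ ≤ ((a^(m*(m+1)+m*m))⁻¹ - (a^(m*(m+1)) * b^(m*m))⁻¹) * z₀^(2*m+1) :=
        mul_le_mul_of_nonneg_right step2 (by positivity)


lemma mySumPhi (a b z₀ : ℝ) (ha : 3 ≤ a) (hab : a ≤ b) (hz1 : 1 < z₀) (hza : z₀ ≤ a) :
    Summable (fun k : ℕ => (-1 : ℝ) ^ k * coeffAB a b k * z₀ ^ k) := by
  have ha0 : (0:ℝ) < a := by linarith
  have hb0 : (0:ℝ) < b := by linarith
  have hz0 : (0:ℝ) < z₀ := by linarith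
  have hcpos : ∀ k, 0 < coeffAB a b k := coeff_pos a b ha0 hb0
  apply summable_of_ratio_norm_eventually_le (r := 1/9) (by norm_num)
  filter_upwards [Filter.eventually_ge_atTop 3] with k hk
  have hr := coeff_ratio a b ha hab k hk
  have hnorm : ∀ j : ℕ, ‖(-1 : ℝ) ^ j * coeffAB a b j * z₀ ^ j‖ = coeffAB a b j * z₀^j := by
    intro j
    rw [Real.norm_eq_abs, abs_mul, abs_mul, abs_pow, abs_pow, abs_neg, abs_one, one_pow,
      one_mul, abs_of_pos (hcpos j), abs_of_pos hz0]
  rw [hnorm, hnorm]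
  have h9a : 9*a ≤ a^3 := by
    nlinarith [mul_nonneg (by linarith : (0:ℝ) ≤ a-3) (mul_pos ha0 ha0).le,
      mul_nonneg (by linarith : (0:ℝ) ≤ a-3) ha0.le]
  have hc1 : 0 < coeffAB a b (k+1) := hcpos _
  have key : coeffAB a b (k+1) * z₀ * 9 ≤ coeffAB a b k := by
    have s1 : coeffAB a b (k+1) * z₀ ≤ coeffAB a b (k+1) * a :=
      mul_le_mul_of_nonneg_left hza hc1.le
    have s2 : coeffAB a b (k+1) * (9*a) ≤ coeffAB a b (k+1) * a^3 :=
      mul_le_mul_of_nonneg_left h9a hc1.le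
    nlinarith [hr]
  calc coeffAB a b (k+1) * z₀^(k+1) = (coeffAB a b (k+1)*z₀)*z₀^k := by ring
  _ ≤ (coeffAB a b k/9)*z₀^k := mul_le_mul_of_nonneg_right (by linarith) (by positivity)
  _ = 1/9*(coeffAB a b k * z₀^k) := by ring

lemma mySumTheta (a z₀ : ℝ) (ha : 3 ≤ a) (hz1 : 1 < z₀) (hza : z₀ ≤ a) :
    Summable (fun k : ℕ => (-(Real.sqrt a * z₀)) ^ k / (Real.sqrt a) ^ (k ^ 2)) := by
  have ha0 : (0:ℝ) < a := by linarith
  have hz0 : (0:ℝ) < z₀ := by linarith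
  set t := Real.sqrt a with htdef
  have ht2 : t^2 = a := Real.sq_sqrt ha0.le
  have ht0 : 0 < t := Real.sqrt_pos.2 ha0
  apply summable_of_ratio_norm_eventually_le (r := 1/9) (by norm_num)
  filter_upwards [Filter.eventually_ge_atTop 4] with k hk
  have hfact : (-(t * z₀)) ^ (k+1) / t ^ ((k+1) ^ 2) =
      ((-(t * z₀)) ^ k / t ^ (k ^ 2)) * (-(t*z₀) / t^(2*k+1)) := by
    rw [show (k+1)^2 = k^2 + (2*k+1) from by ring, pow_add, pow_succ]
    ring
  rw [hfact, norm_mul]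
  have hb : ‖-(t*z₀) / t^(2*k+1)‖ ≤ 1/9 := by
    rw [norm_div, norm_neg, Real.norm_eq_abs, Real.norm_eq_abs,
      abs_of_pos (mul_pos ht0 hz0), abs_of_pos (pow_pos ht0 _)]
    rw [div_le_iff₀ (pow_pos ht0 _)]
    have hak : a^4 ≤ a^k := pow_le_pow_right₀ (by linarith) hk
    have e : t^(2*k+1) = a^k * t := by rw [pow_succ, pow_mul, ht2]
    rw [e]
    have h1 : t*z₀ ≤ t*a := mul_le_mul_of_nonneg_left hza ht0.le
    have h3 : 9*a ≤ a^4 := by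
      nlinarith [mul_nonneg (by linarith : (0:ℝ) ≤ a-3) (pow_nonneg ha0.le 3),
        mul_nonneg (by linarith : (0:ℝ) ≤ a-3) (mul_pos ha0 ha0).le,
        mul_nonneg (by linarith : (0:ℝ) ≤ a-3) ha0.le]
    have h2 : t*(9*a) ≤ t*a^4 := mul_le_mul_of_nonneg_left h3 ht0.le
    have h4 : t*a^4 ≤ t*a^k := mul_le_mul_of_nonneg_left hak ht0.le
    nlinarith
  calc ‖(-(t * z₀)) ^ k / t ^ (k ^ 2)‖ * ‖-(t*z₀) / t^(2*k+1)‖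
      ≤ ‖(-(t * z₀)) ^ k / t ^ (k ^ 2)‖ * (1/9) :=
        mul_le_mul_of_nonneg_left hb (norm_nonneg _)
    _ = 1/9 * ‖(-(t * z₀)) ^ k / t ^ (k ^ 2)‖ := by ring

lemma myMain (a b z₀ : ℝ) (ha : 3 ≤ a) (hab : a ≤ b) (hz1 : 1 < z₀) (hza : z₀ ≤ a) :
    partialThetaReal (Real.sqrt a) (-(Real.sqrt a * z₀)) ≤ phiAB a b z₀ := by
  have ha0 : (0:ℝ) < a := by linarith
  have hb0 : (0:ℝ) < b := by linarith
  have hz0 : (0:ℝ) < z₀ := by linarith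
  set t := Real.sqrt a with htdef
  have ht2 : t^2 = a := Real.sq_sqrt ha0.le
  have ht0 : 0 < t := Real.sqrt_pos.2 ha0
  set Φ : ℕ → ℝ := fun k => (-1 : ℝ) ^ k * coeffAB a b k * z₀ ^ k with hΦdef
  set T : ℕ → ℝ := fun k => (-(t * z₀)) ^ k / t ^ (k ^ 2) with hTdef
  have hsumΦ : Summable Φ := mySumPhi a b z₀ ha hab hz1 hza
  have hsumT : Summable T := mySumTheta a z₀ ha hz1 hza
  have hD : Summable (fun k => Φ k - T k) := hsumΦ.sub hsumT
  have hnn : 0 ≤ ∑' k, (Φ k - T k) := by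
    rw [hD.tsum_eq_zero_add]
    have hD0 : Φ 0 - T 0 = 0 := by
      simp [hΦdef, hTdef, coeffAB]
    rw [hD0, zero_add]
    have hinj1 : Function.Injective (fun k : ℕ => 2*k+1) := by
      intro x y h; simp only at h; omega
    have hinj2 : Function.Injective (fun k : ℕ => 2*k+2) := by
      intro x y h; simp only at h; omega
    have he : Summable (fun k => Φ (2*k+1) - T (2*k+1)) := hD.comp_injective hinj1
    have ho : Summable (fun k => Φ (2*k+2) - T (2*k+2)) := hD.comp_injective hinj2
    have hpair : ∀ m : ℕ, 0 ≤ (Φ (2*m+1) - T (2*m+1)) + (Φ (2*m+2) - T (2*m+2)) := by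
      intro m
      have hΦ1 : Φ (2*m+1) = -((a^(m*(m+1)) * b^(m*m))⁻¹ * z₀^(2*m+1)) := by
        rw [hΦdef]
        simp only
        rw [(coeff_closed a b ha0 hb0 m).1, Odd.neg_one_pow ⟨m, by ring⟩]
        ring
      have hΦ2 : Φ (2*m+2) = (a^((m+1)*(m+1)) * b^(m*(m+1)))⁻¹ * z₀^(2*m+2) := by
        rw [hΦdef]
        simp only
        rw [(coeff_closed a b ha0 hb0 m).2, Even.neg_one_pow ⟨m+1, by ring⟩]
        ring
      have hT1 : T (2*m+1) = -((a^(m*(m+1)+m*m))⁻¹ * z₀^(2*m+1)) := by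
        rw [hTdef]
        simp only
        rw [← ht2, Odd.neg_pow ⟨m, by ring⟩, mul_pow, ← pow_mul]
        have h1 : t ≠ 0 := ht0.ne'
        field_simp
        ring
      have hT2 : T (2*m+2) = (a^((m+1)*(2*m+1)))⁻¹ * z₀^(2*m+2) := by
        rw [hTdef]
        simp only
        rw [← ht2, Even.neg_pow ⟨m+1, by ring⟩, mul_pow, ← pow_mul]
        have h1 : t ≠ 0 := ht0.ne'
        field_simp
        ring
      rw [hΦ1, hΦ2, hT1, hT2]
      have := myPair a b z₀ ha hab hz1 hza m
      nlinarith [this]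
    calc (0:ℝ) ≤ ∑' m, ((Φ (2*m+1) - T (2*m+1)) + (Φ (2*m+2) - T (2*m+2))) :=
          tsum_nonneg hpair
      _ = ∑' m, (Φ (2*m+1) - T (2*m+1)) + ∑' m, (Φ (2*m+2) - T (2*m+2)) := he.tsum_add ho
      _ = ∑' k, (Φ (k+1) - T (k+1)) :=
          tsum_even_add_odd (f := fun n => Φ (n+1) - T (n+1)) he ho
  have hsub := hsumΦ.tsum_sub hsumT
  have : partialThetaReal t (-(t * z₀)) = ∑' k, T k := rfl
  rw [this]
  have : phiAB a b z₀ = ∑' k, Φ k := rfl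
  rw [this]
  linarith [hnn, hsub]

/-- For `3 ≤ a < b`, if `φ_{a,b}(z₀) ≤ 0` for some `z₀ ∈ (1, a]`,
then `g_{√a}(−√a·z₀) ≤ 0`; in particular `y₀ = −√a·z₀` satisfies
`√a < |y₀| ≤ (√a)³` and `g_{√a}(y₀) ≤ 0`. -/
theorem partialTheta_nonpos_of_phiAB (a b : ℝ) (ha : 3 ≤ a) (hab : a < b) (z₀ : ℝ)
    (hz₀ : z₀ ∈ Set.Ioc (1 : ℝ) a) (h : phiAB a b z₀ ≤ 0) :
    partialThetaReal (Real.sqrt a) (-(Real.sqrt a * z₀)) ≤ 0 ∧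
      Real.sqrt a < |(-(Real.sqrt a * z₀))| ∧
      |(-(Real.sqrt a * z₀))| ≤ (Real.sqrt a) ^ 3 := by
  obtain ⟨hz1, hza⟩ := hz₀
  have ha0 : (0:ℝ) < a := by linarith
  have hz0 : (0:ℝ) < z₀ := by linarith
  have ht2 : (Real.sqrt a)^2 = a := Real.sq_sqrt ha0.le
  have ht0 : 0 < Real.sqrt a := Real.sqrt_pos.2 ha0
  have habs : |(-(Real.sqrt a * z₀))| = Real.sqrt a * z₀ := by
    rw [abs_neg, abs_of_pos (mul_pos ht0 hz0)]
  refine ⟨(myMain a b z₀ ha hab.le hz1 hza).trans h, ?_, ?_⟩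
  · rw [habs]
    exact lt_mul_of_one_lt_right ht0 hz1
  · rw [habs]
    calc Real.sqrt a * z₀ ≤ Real.sqrt a * a := mul_le_mul_of_nonneg_left hza ht0.le
    _ = (Real.sqrt a)^3 := by rw [pow_succ, ht2, mul_comm]
end
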